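/- Let ne(v) be the basic Markov neighborhood of v and let W ⊊ ne(v) be a strict subset. Then the expected log-likelihood ratio ∑_{a_{ne(v)}} p(a_{ne(v)}) · D( p(·_v | a_{ne(v)}) ; p(·_v | a_W) ) is strictly positive; equivalently, there exists at least one configuration a_{ne(v)} with p(a_{ne(v)}) > 0 such that D( p(·_v | a_{ne(v)}) ; p(·_v | a_W) ) > 0. -/

import Mathlib

open MeasureTheory

/-- Probability of the cylinder event determined by the configuration `a` on the
finite set of vertices `Δ`. -/
noncomputable def cylProb {V A : Type*} [MeasurableSpace A]
    (μ : Measure (V → A)) (Δ : Finset V) (a : V → A) : ℝ :=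
  (μ {x | ∀ w ∈ Δ, x w = a w}).toReal

/-- Conditional probability `p(a_v | a_Δ)` that `X v = av` given the configuration
`a` on the finite set `Δ` (junk value `0` if the conditioning event is null). -/
noncomputable def condProb {V A : Type*} [MeasurableSpace A]
    (μ : Measure (V → A)) (v : V) (av : A) (Δ : Finset V) (a : V → A) : ℝ :=
  (μ {x | x v = av ∧ ∀ w ∈ Δ, x w = a w}).toReal / cylProb μ Δ a

/-- `W` is a Markov neighborhood of `v`: `v ∉ W` and conditioning on any finite
superset `Δ ⊇ W` not containing `v` gives the same conditional distribution of
`X v`, over all positive-probability configurations. -/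
def IsMarkovNbhd {V A : Type*} [MeasurableSpace A]
    (μ : Measure (V → A)) (v : V) (W : Finset V) : Prop :=
  v ∉ W ∧ ∀ (Δ : Finset V), W ⊆ Δ → v ∉ Δ → ∀ (av : A) (a : V → A),
    0 < cylProb μ Δ a → condProb μ v av Δ a = condProb μ v av W a

namespace KLAux

variable {V A : Type*} [MeasurableSpace A]

def arel (a b : A) : Prop := ∀ S : Set A, MeasurableSet S → (a ∈ S ↔ b ∈ S)
lemma arel_refl (a : A) : arel a a := fun _ _ => Iff.rfl
lemma arel_symm {a b : A} (h : arel a b) : arel b a := fun S hS => (h S hS).symm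
lemma arel_trans {a b c : A} (h : arel a b) (h' : arel b c) : arel a c :=
  fun S hS => (h S hS).trans (h' S hS)
lemma arel_of_eq {a b : A} (h : a = b) : arel a b := h ▸ arel_refl a

def asetoid (A : Type*) [MeasurableSpace A] : Setoid A :=
  ⟨arel, ⟨arel_refl, arel_symm, arel_trans⟩⟩

def atomSet (a : A) : Set A := {b | arel a b}

lemma measurableSet_atomSet [Fintype A] (a : A) : MeasurableSet (atomSet a) := by
  have : atomSet a = ⋂₀ {S : Set A | MeasurableSet S ∧ a ∈ S} := by
    ext b
    constructor
    · intro hb S hS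
      exact (hb S hS.1).mp hS.2
    · intro hb S hS
      constructor
      · intro ha; exact hb S ⟨hS, ha⟩
      · intro hbS
        by_contra ha
        exact (hb Sᶜ ⟨hS.compl, ha⟩) hbS
  rw [this]
  exact MeasurableSet.sInter (Set.to_countable _) (fun t ht => ht.1)

def Sat (s : Set (V → A)) : Prop :=
  ∀ x y : V → A, (∀ w, arel (x w) (y w)) → x ∈ s → y ∈ s

lemma sat_of_measurableSet {s : Set (V → A)} (hs : MeasurableSet s) : Sat s := by
  let m' : MeasurableSpace (V → A) :=
    { MeasurableSet' := Sat
      measurableSet_empty := fun _ _ _ h => h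
      measurableSet_compl := fun s hs x y hxy hx hy =>
        hx (hs y x (fun w => arel_symm (hxy w)) hy)
      measurableSet_iUnion := fun f hf x y hxy hx => by
        obtain ⟨i, hi⟩ := Set.mem_iUnion.mp hx
        exact Set.mem_iUnion.mpr ⟨i, hf i x y hxy hi⟩ }
  have hid : @Measurable _ _ m' MeasurableSpace.pi (id : (V → A) → (V → A)) := by
    rw [@measurable_pi_iff _ _ _ m' _]
    intro w S hS
    exact fun x y hxy hx => (hxy w S hS).mp hx
  exact hid hs

/-! ### saturated cylinders -/

variable [Fintype A]

/-- The saturated cylinder: coordinates on `Δ` lie in the atoms of `a`. -/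
def satCyl (Δ : Finset V) (a : V → A) : Set (V → A) := {x | ∀ w ∈ Δ, arel (a w) (x w)}

/-- The saturated one-point set at `v`. -/
def vSet (v : V) (av : A) : Set (V → A) := {x | arel av (x v)}

lemma measurableSet_satCyl (Δ : Finset V) (a : V → A) : MeasurableSet (satCyl Δ a) := by
  have : satCyl Δ a = ⋂ w ∈ Δ, (fun x : V → A => x w) ⁻¹' atomSet (a w) := by
    ext x; simp [satCyl, atomSet, Set.mem_iInter]
  rw [this]
  exact MeasurableSet.biInter (Δ : Set V).to_countable
    (fun w _ => (measurable_pi_apply w) (measurableSet_atomSet (a w)))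

lemma measurableSet_vSet (v : V) (av : A) : MeasurableSet (vSet v av) := by
  have : vSet v av = (fun x : V → A => x v) ⁻¹' atomSet av := rfl
  rw [this]
  exact (measurable_pi_apply v) (measurableSet_atomSet av)

lemma satCyl_congr {Δ : Finset V} {a a' : V → A} (h : ∀ w ∈ Δ, arel (a w) (a' w)) :
    satCyl Δ a = satCyl Δ a' := by
  ext x
  constructor
  · intro hx w hw; exact arel_trans (arel_symm (h w hw)) (hx w hw)
  · intro hx w hw; exact arel_trans (h w hw) (hx w hw)

lemma satCyl_mono {Δ Δ' : Finset V} (h : Δ ⊆ Δ') (a : V → A) :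
    satCyl Δ' a ⊆ satCyl Δ a := fun x hx w hw => hx w (h hw)

/-- Hull lemma for plain cylinders. -/
lemma measure_cyl (μ : Measure (V → A)) (Δ : Finset V) (a : V → A) [DecidableEq V] :
    μ {x | ∀ w ∈ Δ, x w = a w} = μ (satCyl Δ a) := by
  apply le_antisymm
  · exact measure_mono (fun x hx w hw => arel_of_eq (hx w hw).symm)
  · obtain ⟨t, hsub, htm, hμ⟩ := exists_measurable_superset μ {x | ∀ w ∈ Δ, x w = a w}
    rw [← hμ]
    apply measure_mono
    intro y hy
    have hx : (fun w => if w ∈ Δ then a w else y w) ∈ t := by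
      apply hsub
      intro w hw; simp [hw]
    refine sat_of_measurableSet htm _ y (fun w => ?_) hx
    by_cases hw : w ∈ Δ
    · simpa [hw] using hy w hw
    · simp [hw, arel_refl]

/-- Hull lemma for cylinders with the extra point constraint at `v ∉ Δ`. -/
lemma measure_cylv (μ : Measure (V → A)) {v : V} {Δ : Finset V} (hv : v ∉ Δ)
    (av : A) (a : V → A) [DecidableEq V] :
    μ {x | x v = av ∧ ∀ w ∈ Δ, x w = a w} = μ (vSet v av ∩ satCyl Δ a) := by
  apply le_antisymm
  · apply measure_mono
    rintro x ⟨h1, h2⟩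
    exact ⟨arel_of_eq h1.symm, fun w hw => arel_of_eq (h2 w hw).symm⟩
  · obtain ⟨t, hsub, htm, hμ⟩ :=
      exists_measurable_superset μ {x | x v = av ∧ ∀ w ∈ Δ, x w = a w}
    rw [← hμ]
    apply measure_mono
    rintro y ⟨hyv, hyΔ⟩
    have hx : (fun w => if w ∈ Δ then a w else if w = v then av else y w) ∈ t := by
      apply hsub
      constructor
      · simp [hv]
      · intro w hw; simp [hw]
    refine sat_of_measurableSet htm _ y (fun w => ?_) hx
    by_cases hw : w ∈ Δ
    · simpa [hw] using hyΔ w hw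
    · by_cases hwv : w = v
      · subst hwv; simpa [hw, vSet] using hyv
      · simp [hw, hwv, arel_refl]


noncomputable instance fintypeQuot (A : Type*) [MeasurableSpace A] [Fintype A] :
    Fintype (Quotient (asetoid A)) := @Fintype.ofFinite _ (Quotient.finite _)

variable [DecidableEq V]

/-- Merge: use `a` outside `n \ Δ`, and representatives of the atoms `g` on `n \ Δ`. -/
noncomputable def mrg (Δ n : Finset V) (a : V → A)
    (g : {w // w ∈ n \ Δ} → Quotient (asetoid A)) : V → A :=
  fun w => if h : w ∈ n \ Δ then (g ⟨w, h⟩).out else a w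

lemma mrg_eq_on {Δ n : Finset V} {a : V → A} (g : {w // w ∈ n \ Δ} → Quotient (asetoid A))
    {w : V} (hw : w ∈ Δ) : mrg Δ n a g w = a w := by
  have : w ∉ n \ Δ := fun h => (Finset.mem_sdiff.mp h).2 hw
  simp [mrg, this]

lemma decomp (μ : Measure (V → A)) {s : Set (V → A)} (hs : MeasurableSet s)
    (Δ n : Finset V) (a : V → A) :
    μ (s ∩ satCyl Δ a)
      = ∑' g : ({w // w ∈ n \ Δ} → Quotient (asetoid A)),
          μ (s ∩ satCyl (Δ ∪ n) (mrg Δ n a g)) := by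
  have hU : s ∩ satCyl Δ a = ⋃ g : ({w // w ∈ n \ Δ} → Quotient (asetoid A)),
      s ∩ satCyl (Δ ∪ n) (mrg Δ n a g) := by
    apply Set.Subset.antisymm
    · rintro x ⟨hxs, hxc⟩
      refine Set.mem_iUnion.mpr ⟨fun u => ⟦x u.1⟧, hxs, ?_⟩
      intro w hw
      by_cases h : w ∈ n \ Δ
      · have : mrg Δ n a (fun u => ⟦x u.1⟧) w = (⟦x w⟧ : Quotient (asetoid A)).out := by
          simp [mrg, h]
        rw [this]
        exact @Quotient.mk_out _ (asetoid A) (x w)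
      · have hwΔ : w ∈ Δ := by
          rcases Finset.mem_union.mp hw with h' | h'
          · exact h'
          · by_contra hc
            exact h (Finset.mem_sdiff.mpr ⟨h', hc⟩)
        rw [mrg_eq_on _ hwΔ]
        exact hxc w hwΔ
    · apply Set.iUnion_subset
      intro g
      apply Set.inter_subset_inter_right
      intro x hx
      intro w hw
      have := hx w (Finset.mem_union_left _ hw)
      rwa [mrg_eq_on g hw] at this
  rw [hU]
  apply measure_iUnion
  · intro g g' hne
    rw [Function.onFun, Set.disjoint_left]
    rintro x ⟨-, hx⟩ ⟨-, hx'⟩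
    apply hne
    funext u
    obtain ⟨w, hw⟩ := u
    have hwU : w ∈ Δ ∪ n := Finset.mem_union_right _ (Finset.mem_sdiff.mp hw).1
    have h1 : arel ((g ⟨w, hw⟩).out) (x w) := by
      have := hx w hwU; rwa [show mrg Δ n a g w = (g ⟨w, hw⟩).out by simp [mrg, hw]] at this
    have h2 : arel ((g' ⟨w, hw⟩).out) (x w) := by
      have := hx' w hwU; rwa [show mrg Δ n a g' w = (g' ⟨w, hw⟩).out by simp [mrg, hw]] at this
    have : arel ((g ⟨w, hw⟩).out) ((g' ⟨w, hw⟩).out) := arel_trans h1 (arel_symm h2)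
    exact Quotient.out_equiv_out.mp this
  · intro g
    exact hs.inter (measurableSet_satCyl _ _)


/-- Key pointwise inequality: `p - q ≤ p log (p/q)` for `p ≥ 0`, `q > 0`. -/
lemma key_ineq {p q : ℝ} (hp : 0 ≤ p) (hq : 0 < q) : p - q ≤ p * Real.log (p / q) := by
  rcases hp.eq_or_lt with h0 | h0
  · simp [← h0]
    linarith
  · have h := Real.log_le_sub_one_of_pos (div_pos hq h0)
    have hlog : Real.log (p / q) = - Real.log (q / p) := by
      rw [Real.log_div h0.ne' hq.ne', Real.log_div hq.ne' h0.ne']; ring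
    have hc : p * (q / p) = q := by field_simp
    rw [hlog]
    nlinarith [mul_le_mul_of_nonneg_left h h0.le]

lemma key_ineq_strict {p q : ℝ} (hp : 0 ≤ p) (hq : 0 < q) (hne : p ≠ q) :
    p - q < p * Real.log (p / q) := by
  rcases hp.eq_or_lt with h0 | h0
  · simp [← h0]
    linarith
  · have hq1 : q / p ≠ 1 := by
      intro h
      rw [div_eq_one_iff_eq h0.ne'] at h
      exact hne h.symm
    have h := Real.log_lt_sub_one_of_pos (div_pos hq h0) hq1
    have hlog : Real.log (p / q) = - Real.log (q / p) := by
      rw [Real.log_div h0.ne' hq.ne', Real.log_div hq.ne' h0.ne']; ring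
    have hc : p * (q / p) = q := by field_simp
    rw [hlog]
    nlinarith [mul_lt_mul_of_pos_left h h0]


/-! ### real-valued cylinder masses -/

variable (μ : Measure (V → A))

noncomputable def m1 (Δ : Finset V) (a : V → A) : ℝ := (μ (satCyl Δ a)).toReal

noncomputable def m2 (v : V) (av : A) (Δ : Finset V) (a : V → A) : ℝ :=
  (μ (vSet v av ∩ satCyl Δ a)).toReal

variable {μ}

lemma m1_nonneg (Δ : Finset V) (a : V → A) : 0 ≤ m1 μ Δ a := ENNReal.toReal_nonneg
lemma m2_nonneg (v : V) (av : A) (Δ : Finset V) (a : V → A) : 0 ≤ m2 μ v av Δ a :=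
  ENNReal.toReal_nonneg

variable [IsFiniteMeasure μ]

lemma m2_le_m1 (v : V) (av : A) (Δ : Finset V) (a : V → A) : m2 μ v av Δ a ≤ m1 μ Δ a :=
  ENNReal.toReal_mono (measure_ne_top μ _) (measure_mono Set.inter_subset_right)

lemma m1_anti {Δ Δ' : Finset V} (h : Δ ⊆ Δ') (a : V → A) : m1 μ Δ' a ≤ m1 μ Δ a :=
  ENNReal.toReal_mono (measure_ne_top μ _) (measure_mono (satCyl_mono h a))

lemma m2_anti (v : V) (av : A) {Δ Δ' : Finset V} (h : Δ ⊆ Δ') (a : V → A) :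
    m2 μ v av Δ' a ≤ m2 μ v av Δ a :=
  ENNReal.toReal_mono (measure_ne_top μ _)
    (measure_mono (Set.inter_subset_inter_right _ (satCyl_mono h a)))

lemma m1_congr {Δ : Finset V} {a a' : V → A} (h : ∀ w ∈ Δ, arel (a w) (a' w)) :
    m1 μ Δ a = m1 μ Δ a' := by unfold m1; rw [satCyl_congr h]

lemma m2_congr (v : V) (av : A) {Δ : Finset V} {a a' : V → A}
    (h : ∀ w ∈ Δ, arel (a w) (a' w)) : m2 μ v av Δ a = m2 μ v av Δ a' := by
  unfold m2; rw [satCyl_congr h]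

lemma cylProb_eq (Δ : Finset V) (a : V → A) : cylProb μ Δ a = m1 μ Δ a := by
  unfold cylProb m1; rw [measure_cyl]

lemma condProb_eq {v : V} {Δ : Finset V} (hv : v ∉ Δ) (av : A) (a : V → A) :
    condProb μ v av Δ a = m2 μ v av Δ a / m1 μ Δ a := by
  unfold condProb m2; rw [measure_cylv μ hv, cylProb_eq]

lemma condProb_nonneg (v : V) (av : A) (Δ : Finset V) (a : V → A) :
    0 ≤ condProb μ v av Δ a :=
  div_nonneg ENNReal.toReal_nonneg ENNReal.toReal_nonneg

lemma condProb_congr {v : V} {av : A} {Δ : Finset V} {a a' : V → A}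
    (h : ∀ w ∈ Δ, a w = a' w) : condProb μ v av Δ a = condProb μ v av Δ a' := by
  have h1 : {x : V → A | x v = av ∧ ∀ w ∈ Δ, x w = a w}
      = {x | x v = av ∧ ∀ w ∈ Δ, x w = a' w} := by
    ext x
    constructor
    · rintro ⟨h1, h2⟩; exact ⟨h1, fun w hw => (h2 w hw).trans (h w hw)⟩
    · rintro ⟨h1, h2⟩; exact ⟨h1, fun w hw => (h2 w hw).trans (h w hw).symm⟩
  have h2 : {x : V → A | ∀ w ∈ Δ, x w = a w} = {x | ∀ w ∈ Δ, x w = a' w} := by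
    ext x
    constructor
    · intro hx w hw; exact (hx w hw).trans (h w hw)
    · intro hx w hw; exact (hx w hw).trans (h w hw).symm
  unfold condProb cylProb
  rw [h1, h2]

lemma mul_condProb {v : V} {Δ : Finset V} (hv : v ∉ Δ) (av : A) (a : V → A) :
    m1 μ Δ a * condProb μ v av Δ a = m2 μ v av Δ a := by
  rw [condProb_eq hv]
  rcases (m1_nonneg (μ := μ) Δ a).eq_or_lt with h0 | h0
  · rw [← h0, zero_mul]
    exact le_antisymm ((m2_le_m1 v av Δ a).trans h0.ge) (m2_nonneg v av Δ a) |>.symm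
  · field_simp

lemma m1_decomp (Δ n : Finset V) (a : V → A) :
    m1 μ Δ a = ∑ g : ({w // w ∈ n \ Δ} → Quotient (asetoid A)),
      m1 μ (Δ ∪ n) (mrg Δ n a g) := by
  unfold m1
  have := decomp μ MeasurableSet.univ Δ n a
  simp only [Set.univ_inter] at this
  rw [this, ENNReal.tsum_toReal_eq (fun _ => measure_ne_top μ _), tsum_fintype]

lemma m2_decomp (v : V) (av : A) (Δ n : Finset V) (a : V → A) :
    m2 μ v av Δ a = ∑ g : ({w // w ∈ n \ Δ} → Quotient (asetoid A)),
      m2 μ v av (Δ ∪ n) (mrg Δ n a g) := by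
  unfold m2
  rw [decomp μ (measurableSet_vSet v av) Δ n a,
    ENNReal.tsum_toReal_eq (fun _ => measure_ne_top μ _), tsum_fintype]

/-! ### Case A: matching conditionals make `W` a Markov neighborhood -/

lemma markov_of_match {v : V} {nev : Finset V} (hnev : IsMarkovNbhd μ v nev)
    {W : Finset V} (hWn : W ⊆ nev) (hvW : v ∉ W)
    (hC : ∀ a : V → A, 0 < cylProb μ nev a →
      ∀ av : A, condProb μ v av nev a = condProb μ v av W a) :
    IsMarkovNbhd μ v W := by
  refine ⟨hvW, ?_⟩
  intro Δ hWΔ hvΔ av a hpos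
  have hvn : v ∉ nev := hnev.1
  have hvU : v ∉ Δ ∪ nev := by
    rw [Finset.mem_union]; push_neg; exact ⟨hvΔ, hvn⟩
  have key : ∀ g : ({w // w ∈ nev \ Δ} → Quotient (asetoid A)),
      m2 μ v av (Δ ∪ nev) (mrg Δ nev a g)
        = condProb μ v av W a * m1 μ (Δ ∪ nev) (mrg Δ nev a g) := by
    intro g
    rcases (m1_nonneg (μ := μ) (Δ ∪ nev) (mrg Δ nev a g)).eq_or_lt with h0 | h0
    · rw [← h0, mul_zero]
      exact le_antisymm ((m2_le_m1 v av _ _).trans h0.ge) (m2_nonneg v av _ _)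
    · have hcyl : 0 < cylProb μ (Δ ∪ nev) (mrg Δ nev a g) := by
        rwa [cylProb_eq]
      have e1 := hnev.2 (Δ ∪ nev) Finset.subset_union_right hvU av _ hcyl
      have hcyl2 : 0 < cylProb μ nev (mrg Δ nev a g) := by
        rw [cylProb_eq]
        exact lt_of_lt_of_le h0 (m1_anti Finset.subset_union_right _)
      have e2 := hC _ hcyl2 av
      have e3 : condProb μ v av W (mrg Δ nev a g) = condProb μ v av W a :=
        condProb_congr (fun w hw => mrg_eq_on g (hWΔ hw))
      have e := e1.trans (e2.trans e3)
      rw [condProb_eq hvU, div_eq_iff h0.ne'] at e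
      exact e
  have h2 := m2_decomp (μ := μ) v av Δ nev a
  have h1 := m1_decomp (μ := μ) Δ nev a
  have hm1pos : 0 < m1 μ Δ a := by rwa [cylProb_eq] at hpos
  rw [condProb_eq hvΔ, h2, Finset.sum_congr rfl (fun g _ => key g), ← Finset.mul_sum, ← h1]
  field_simp


/-! ### Case B: a genuinely different conditional yields positive KL -/

lemma main_pos {v : V} {nev W : Finset V} (hvn : v ∉ nev) (hWn : W ⊆ nev)
    (b : V → A) (hbpos : 0 < cylProb μ nev b) (av0 : A)
    (hne : condProb μ v av0 nev b ≠ condProb μ v av0 W b) :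
    ∃ a : V → A, 0 < cylProb μ nev a ∧
      0 < ∑ av : A, condProb μ v av nev a *
        Real.log (condProb μ v av nev a / condProb μ v av W a) := by
  classical
  have hvW : v ∉ W := fun h => hvn (hWn h)
  have hWun : W ∪ nev = nev := Finset.union_eq_right.mpr hWn
  set ι := ({w // w ∈ nev \ W} → Quotient (asetoid A)) with hι
  set c : ι → V → A := fun g => mrg W nev b g with hc
  set lam : ι → ℝ := fun g => m1 μ nev (c g) with hlam
  set N : ι → A → ℝ := fun g av => m2 μ v av nev (c g) with hN
  set q : A → ℝ := fun av => condProb μ v av W b with hqdef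
  set p : ι → A → ℝ := fun g av => condProb μ v av nev (c g) with hpdef
  have hbpos' : 0 < m1 μ nev b := by rwa [cylProb_eq] at hbpos
  have hL : 0 < m1 μ W b := lt_of_lt_of_le hbpos' (m1_anti hWn b)
  -- decomposition identities
  have hsl : ∑ g : ι, lam g = m1 μ W b := by
    have h := m1_decomp (μ := μ) W nev b
    rw [hWun] at h
    exact h.symm
  have hsN : ∀ av : A, ∑ g : ι, N g av = m2 μ v av W b := by
    intro av
    have h := m2_decomp (μ := μ) v av W nev b
    rw [hWun] at h
    exact h.symm
  have hqeq : ∀ av, q av = m2 μ v av W b / m1 μ W b := fun av => condProb_eq hvW av b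
  have hqnonneg : ∀ av, 0 ≤ q av := fun av => condProb_nonneg v av W b
  have hlp : ∀ g av, lam g * p g av = N g av := fun g av => mul_condProb hvn av (c g)
  have hqc : ∀ (g : ι) (av : A), condProb μ v av W (c g) = q av := fun g av =>
    condProb_congr (fun w hw => mrg_eq_on g hw)
  -- the distinguished index
  set g0 : ι := fun u => (⟦b u.1⟧ : Quotient (asetoid A)) with hg0
  have hrel0 : ∀ w ∈ nev, arel (c g0 w) (b w) := by
    intro w hw
    by_cases h : w ∈ nev \ W
    · have : c g0 w = (⟦b w⟧ : Quotient (asetoid A)).out := by simp [hc, mrg, h, hg0]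
      rw [this]
      exact @Quotient.mk_out _ (asetoid A) (b w)
    · have hwW : w ∈ W := by
        by_contra hcw
        exact h (Finset.mem_sdiff.mpr ⟨hw, hcw⟩)
      rw [show c g0 w = b w from mrg_eq_on g0 hwW]
      exact arel_refl _
  have e0 : lam g0 = m1 μ nev b := m1_congr hrel0
  have e0' : ∀ av, N g0 av = m2 μ v av nev b := fun av => m2_congr v av hrel0
  have ep0 : ∀ av, p g0 av = condProb μ v av nev b := by
    intro av
    show condProb μ v av nev (c g0) = _
    rw [condProb_eq hvn, condProb_eq hvn, m1_congr hrel0, m2_congr v av hrel0]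
  have hlam0 : 0 < lam g0 := by rw [e0]; exact hbpos'
  have hb0 : p g0 av0 ≠ q av0 := by rw [ep0]; exact hne
  -- q av0 is positive
  have hqpos : 0 < q av0 := by
    rcases (hqnonneg av0).eq_or_lt with h0 | h0
    · exfalso
      have hM0 : m2 μ v av0 W b = 0 := by
        have := hqeq av0
        rw [← h0] at this
        rcases (div_eq_zero_iff.mp this.symm) with h | h
        · exact h
        · exact absurd h hL.ne'
      have hnb : m2 μ v av0 nev b = 0 :=
        le_antisymm ((m2_anti v av0 hWn b).trans hM0.le) (m2_nonneg v av0 nev b)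
      apply hb0
      rw [ep0, ← h0, condProb_eq hvn, hnb, zero_div]
    · exact h0
  -- nonnegativity per letter
  have hterm_le : ∀ (av : A), 0 < q av → ∀ g : ι,
      N g av - q av * lam g ≤ lam g * (p g av * Real.log (p g av / q av)) := by
    intro av hq g
    rcases (m1_nonneg (μ := μ) nev (c g)).eq_or_lt with h0 | h0
    · have hlg : lam g = 0 := h0.symm
      have hNg : N g av = 0 := by
        rw [← hlp g av, hlg, zero_mul]
      rw [hlg, hNg, zero_mul]
      nlinarith [hq]
    · have hlg : 0 < lam g := h0
      have hkey := key_ineq (condProb_nonneg (μ := μ) v av nev (c g)) hq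
      have := mul_le_mul_of_nonneg_left hkey hlg.le
      calc N g av - q av * lam g = lam g * (p g av - q av) := by
            rw [mul_sub, hlp g av]; ring
        _ ≤ lam g * (p g av * Real.log (p g av / q av)) := this
  have hterm_lt : N g0 av0 - q av0 * lam g0
      < lam g0 * (p g0 av0 * Real.log (p g0 av0 / q av0)) := by
    have hkey := key_ineq_strict (condProb_nonneg (μ := μ) v av0 nev (c g0)) hqpos hb0
    have := mul_lt_mul_of_pos_left hkey hlam0
    calc N g0 av0 - q av0 * lam g0 = lam g0 * (p g0 av0 - q av0) := by
          rw [mul_sub, hlp g0 av0]; ring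
      _ < _ := this
  -- column sums
  have hS_nonneg : ∀ av : A, 0 ≤ ∑ g : ι, lam g * (p g av * Real.log (p g av / q av)) := by
    intro av
    rcases (hqnonneg av).eq_or_lt with h0 | h0
    · -- q av = 0 : every term vanishes
      have hM0 : m2 μ v av W b = 0 := by
        have := hqeq av
        rw [← h0] at this
        rcases (div_eq_zero_iff.mp this.symm) with h | h
        · exact h
        · exact absurd h hL.ne'
      have hNz : ∀ g : ι, N g av = 0 := by
        have hsum : ∑ g : ι, N g av = 0 := by rw [hsN av, hM0]
        intro g
        exact (Finset.sum_eq_zero_iff_of_nonneg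
          (fun g _ => m2_nonneg v av nev (c g))).mp hsum g (Finset.mem_univ g)
      apply Finset.sum_nonneg
      intro g _
      have hp0 : p g av = 0 := by
        show condProb μ v av nev (c g) = 0
        rw [condProb_eq hvn]
        have hz : m2 μ v av nev (c g) = 0 := hNz g
        rw [hz, zero_div]
      rw [hp0]
      simp
    · have h1 : ∑ g : ι, (N g av - q av * lam g)
          ≤ ∑ g : ι, lam g * (p g av * Real.log (p g av / q av)) :=
        Finset.sum_le_sum (fun g _ => hterm_le av h0 g)
      have h2 : ∑ g : ι, (N g av - q av * lam g) = 0 := by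
        rw [Finset.sum_sub_distrib, hsN av, ← Finset.mul_sum, hsl, hqeq av]
        field_simp
        ring
      linarith
  have hS0 : 0 < ∑ g : ι, lam g * (p g av0 * Real.log (p g av0 / q av0)) := by
    have h1 : ∑ g : ι, (N g av0 - q av0 * lam g)
        < ∑ g : ι, lam g * (p g av0 * Real.log (p g av0 / q av0)) :=
      Finset.sum_lt_sum (fun g _ => hterm_le av0 hqpos g) ⟨g0, Finset.mem_univ g0, hterm_lt⟩
    have h2 : ∑ g : ι, (N g av0 - q av0 * lam g) = 0 := by
      rw [Finset.sum_sub_distrib, hsN av0, ← Finset.mul_sum, hsl, hqeq av0]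
      field_simp
      ring
    linarith
  -- total positivity
  have big : 0 < ∑ g : ι, lam g * ∑ av : A, p g av * Real.log (p g av / q av) := by
    have expand : ∑ g : ι, lam g * ∑ av : A, p g av * Real.log (p g av / q av)
        = ∑ av : A, ∑ g : ι, lam g * (p g av * Real.log (p g av / q av)) := by
      rw [Finset.sum_comm]
      exact Finset.sum_congr rfl (fun g _ => Finset.mul_sum _ _ _)
    rw [expand]
    exact Finset.sum_pos' (fun av _ => hS_nonneg av) ⟨av0, Finset.mem_univ av0, hS0⟩
  -- extract a witness
  have : ∑ g : ι, (0:ℝ) < ∑ g : ι, lam g * ∑ av : A, p g av * Real.log (p g av / q av) := by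
    simpa using big
  obtain ⟨g, -, hg⟩ := Finset.exists_lt_of_sum_lt this
  have hg' : 0 < lam g * ∑ av : A, p g av * Real.log (p g av / q av) := hg
  have hlamg : 0 < lam g := by
    rcases (m1_nonneg (μ := μ) nev (c g)).eq_or_lt with h0 | h0
    · exfalso
      have hz : lam g = 0 := h0.symm
      rw [hz, zero_mul] at hg'
      exact lt_irrefl 0 hg'
    · exact h0
  have hFg : 0 < ∑ av : A, p g av * Real.log (p g av / q av) := by
    by_contra hcon
    push_neg at hcon
    have h2 : lam g * ∑ av : A, p g av * Real.log (p g av / q av) ≤ 0 :=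
      mul_nonpos_of_nonneg_of_nonpos hlamg.le hcon
    linarith
  refine ⟨c g, ?_, ?_⟩
  · rw [cylProb_eq]; exact hlamg
  · have : ∑ av : A, condProb μ v av nev (c g) *
        Real.log (condProb μ v av nev (c g) / condProb μ v av W (c g))
        = ∑ av : A, p g av * Real.log (p g av / q av) := by
      apply Finset.sum_congr rfl
      intro av _
      rw [hqc g av]
    rw [this]
    exact hFg

end KLAux

/-- If `ne v` is the basic (smallest) Markov neighborhood of `v` and `W ⊊ ne v`
is a strict subset, then there exists a positive-probability configuration
`a` on `ne v` for which the Kullback–Leibler divergence between the conditional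
distributions `p(·_v | a_{ne(v)})` and `p(·_v | a_W)` is strictly positive
(equivalently, the expected log-likelihood ratio
`∑_{a} p(a_{ne(v)}) D(p(·_v|a_{ne(v)}); p(·_v|a_W))` is strictly positive). -/
theorem kl_positive_of_strict_subset {V A : Type*} [Countable V] [DecidableEq V]
    [MeasurableSpace A] [Fintype A]
    (μ : Measure (V → A)) [IsProbabilityMeasure μ]
    (hinter : ∀ (v : V) (W₁ W₂ : Finset V), IsMarkovNbhd μ v W₁ → IsMarkovNbhd μ v W₂ →
      IsMarkovNbhd μ v (W₁ ∩ W₂))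
    (v : V) (nev : Finset V)
    (hnev : IsMarkovNbhd μ v nev)
    (hmin : ∀ W' : Finset V, IsMarkovNbhd μ v W' → nev ⊆ W')
    (W : Finset V) (hW : W ⊂ nev) :
    ∃ a : V → A, 0 < cylProb μ nev a ∧
      0 < ∑ av : A, condProb μ v av nev a *
        Real.log (condProb μ v av nev a / condProb μ v av W a) := by
  classical
  have hvn : v ∉ nev := hnev.1
  have hWsub : W ⊆ nev := hW.subset
  have hvW : v ∉ W := fun h => hvn (hWsub h)
  by_cases hC : ∀ a : V → A, 0 < cylProb μ nev a →
      ∀ av : A, condProb μ v av nev a = condProb μ v av W a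
  · exact absurd (hmin W (KLAux.markov_of_match hnev hWsub hvW hC)) hW.not_subset
  · push_neg at hC
    obtain ⟨b, hbpos, av0, hne0⟩ := hC
    exact KLAux.main_pos hvn hWsub b hbpos av0 hne0
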